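/- arXiv:1604.03883 — 2 statements merged into one kernel-verified Lean document; each statement's English description precedes it below -/
import Mathlib

section
/- If F : 𝔹₂ → 𝔻 is holomorphic and satisfies F(z₁,0) = z₁ for all z₁ ∈ 𝔻, then for every z₂ ∈ 𝔻 one has |F(0,z₂)| ≤ |z₂|²/(2 − |z₂|²). -/
open Metric Set Complex Filter Topology

noncomputable section

/-- `ℂⁿ` with the Euclidean norm; `𝔹ₙ` is `Metric.ball 0 1` in this space. -/
abbrev En (n : ℕ) := EuclideanSpace ℂ (Fin n)

/-- The Möbius map `m_a` interchanging `0` and `a`. -/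
def mob (a z : ℂ) : ℂ := (a - z) / (1 - (starRingEnd ℂ) a * z)

/-- A Blaschke product of degree `k`: `z ↦ η * ∏ j, m_{α j}(z)` with `|η| = 1`, `α j ∈ 𝔻`. -/
def IsBlaschke (k : ℕ) (B : ℂ → ℂ) : Prop :=
  ∃ η : ℂ, ‖η‖ = 1 ∧ ∃ α : Fin k → ℂ, (∀ j, α j ∈ ball (0 : ℂ) 1) ∧
    ∀ z : ℂ, B z = η * ∏ j, mob (α j) z

/-- The Pick problem `𝔹ₙ → 𝔻`, `z j ↦ lam j`, is extremal: it is solvable by a holomorphic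
map `𝔹ₙ → 𝔻`, but by no holomorphic solution with `sup_{𝔹ₙ} |G| < 1`. -/
def ExtremalPick {n : ℕ} {ι : Type} (z : ι → En n) (lam : ι → ℂ) : Prop :=
  (∃ F : En n → ℂ, DifferentiableOn ℂ F (ball 0 1) ∧
      MapsTo F (ball (0 : En n) 1) (ball (0 : ℂ) 1) ∧ ∀ j, F (z j) = lam j) ∧
  ¬ ∃ G : En n → ℂ, DifferentiableOn ℂ G (ball 0 1) ∧ (∀ j, G (z j) = lam j) ∧
      ∃ r : ℝ, r < 1 ∧ ∀ x ∈ ball (0 : En n) 1, ‖G x‖ ≤ r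

/-- An extremal 3-point Pick problem is non-degenerate if no 2-point subproblem is extremal. -/
def ExtremalPick3Nondeg {n : ℕ} (z : Fin 3 → En n) (lam : Fin 3 → ℂ) : Prop :=
  ExtremalPick z lam ∧
    ∀ i j : Fin 3, i ≠ j → ¬ ExtremalPick ![z i, z j] ![lam i, lam j]

/-- `ℬ(w)`: values at `w` of holomorphic maps `F : 𝔹₂ → 𝔻` with `F(z₁,0) = z₁` on `𝔻`. -/
def Bset (w : En 2) : Set ℂ :=
  {σ | ∃ F : En 2 → ℂ, DifferentiableOn ℂ F (ball 0 1) ∧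
    MapsTo F (ball (0 : En 2) 1) (ball (0 : ℂ) 1) ∧
    (∀ z₁ ∈ ball (0 : ℂ) 1, F !₂[z₁, 0] = z₁) ∧ F w = σ}

lemma normSq_lt {a z : ℂ} (ha : ‖a‖ < 1) (hz : ‖z‖ < 1) :
    Complex.normSq (a - z) < Complex.normSq (1 - (starRingEnd ℂ) a * z) := by
  have ha' : Complex.normSq a < 1 := by
    rw [← Complex.sq_norm]; nlinarith [norm_nonneg a]
  have hz' : Complex.normSq z < 1 := by
    rw [← Complex.sq_norm]; nlinarith [norm_nonneg z]
  have h1 : 0 < (1 - Complex.normSq a) * (1 - Complex.normSq z) := by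
    nlinarith [Complex.normSq_nonneg a, Complex.normSq_nonneg z]
  simp only [Complex.normSq_apply, Complex.sub_re, Complex.sub_im, Complex.mul_re,
    Complex.mul_im, Complex.conj_re, Complex.conj_im, Complex.one_re, Complex.one_im] at *
  nlinarith [h1]

lemma mob_denom_ne {a z : ℂ} (ha : ‖a‖ < 1) (hz : ‖z‖ < 1) :
    1 - (starRingEnd ℂ) a * z ≠ 0 := by
  intro h
  have := normSq_lt ha hz
  rw [h, map_zero] at this
  exact absurd this (not_lt.2 (Complex.normSq_nonneg _))

lemma abs_mob_lt_one {a z : ℂ} (ha : ‖a‖ < 1) (hz : ‖z‖ < 1) :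
    ‖mob a z‖ < 1 := by
  have hd := mob_denom_ne ha hz
  rw [mob, norm_div, div_lt_one (by simpa using norm_pos_iff.mpr hd)]
  refine lt_of_pow_lt_pow_left₀ 2 (norm_nonneg _) ?_
  rw [Complex.sq_norm, Complex.sq_norm]
  exact normSq_lt ha hz

lemma mob_zero (a : ℂ) : mob a 0 = a := by simp [mob]

lemma mob_self (a : ℂ) : mob a a = 0 := by simp [mob]

lemma mob_mob {a z : ℂ} (ha : ‖a‖ < 1) (hz : ‖z‖ < 1) :
    mob a (mob a z) = z := by
  have hd := mob_denom_ne ha hz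
  have hd2 : 1 - (starRingEnd ℂ) a * a ≠ 0 := mob_denom_ne ha ha
  have hd2' : (1:ℂ) - a * (starRingEnd ℂ) a ≠ 0 := by rwa [mul_comm] at hd2
  have hd' : 1 - z * (starRingEnd ℂ) a ≠ 0 := by rwa [mul_comm] at hd
  unfold mob
  field_simp
  have hden : (1 - z * (starRingEnd ℂ) a - (a - z) * (starRingEnd ℂ) a)
      = 1 - a * (starRingEnd ℂ) a := by ring
  rw [hden, div_eq_iff hd2']
  ring

lemma mob_differentiableOn {a : ℂ} (ha : ‖a‖ < 1) :
    DifferentiableOn ℂ (mob a) (ball 0 1) := by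
  apply DifferentiableOn.div
  · exact (differentiable_const a |>.sub differentiable_id).differentiableOn
  · exact ((differentiable_const _).sub ((differentiable_const _).mul differentiable_id)).differentiableOn
  · intro z hz
    exact mob_denom_ne ha (by simpa [mem_ball, dist_zero_right] using hz)

lemma mob_mapsTo {a : ℂ} (ha : ‖a‖ < 1) :
    MapsTo (mob a) (ball (0:ℂ) 1) (ball (0:ℂ) 1) := fun z hz => by
  simp only [mem_ball, dist_zero_right] at *
  exact abs_mob_lt_one ha hz

lemma schwarz_pick {g : ℂ → ℂ} (hg : DifferentiableOn ℂ g (ball 0 1))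
    (hm : MapsTo g (ball 0 1) (ball 0 1)) {u v : ℂ}
    (hu : ‖u‖ < 1) (hv : ‖v‖ < 1) :
    ‖mob (g u) (g v)‖ ≤ ‖mob u v‖ := by
  have hu' : u ∈ ball (0:ℂ) 1 := by simpa [mem_ball, dist_zero_right] using hu
  have hgu : ‖g u‖ < 1 := by
    simpa [mem_ball, dist_zero_right] using hm hu'
  have hd : DifferentiableOn ℂ (mob (g u) ∘ (g ∘ mob u)) (ball 0 1) :=
    (mob_differentiableOn hgu).comp (hg.comp (mob_differentiableOn hu) (mob_mapsTo hu))
      (hm.comp (mob_mapsTo hu))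
  have hmm : MapsTo (mob (g u) ∘ (g ∘ mob u)) (ball (0:ℂ) 1) (ball (0:ℂ) 1) :=
    (mob_mapsTo hgu).comp (hm.comp (mob_mapsTo hu))
  have h0 : (mob (g u) ∘ (g ∘ mob u)) 0 = 0 := by
    simp [Function.comp, mob_zero, mob_self]
  have key := Complex.norm_le_norm_of_mapsTo_ball_self hd (hmm.mono_right ball_subset_closedBall) h0
    (z := mob u v) (abs_mob_lt_one hu hv)
  simpa [Function.comp, mob_mob hu hv] using key

lemma mem_ball_En2 {x : En 2} :
    x ∈ ball (0 : En 2) 1 ↔ (‖x 0‖)^2 + (‖x 1‖)^2 < 1 := by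
  rw [mem_ball_zero_iff, EuclideanSpace.norm_eq]
  rw [show ∑ i, ‖x i‖^2 = (‖x 0‖)^2 + (‖x 1‖)^2 by
    simp [Fin.sum_univ_two]]
  set A := (‖x 0‖)^2 + (‖x 1‖)^2 with hA
  have hA0 : 0 ≤ A := by positivity
  constructor
  · intro h
    nlinarith [Real.sq_sqrt hA0, Real.sqrt_nonneg A]
  · intro h
    have := Real.sqrt_lt_sqrt hA0 h
    simpa using this

lemma sliceIneq (F : En 2 → ℂ) (hF : DifferentiableOn ℂ F (ball 0 1))
    (hFm : MapsTo F (ball (0 : En 2) 1) (ball (0 : ℂ) 1))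
    (hfix : ∀ z₁ ∈ ball (0 : ℂ) 1, F !₂[z₁, 0] = z₁)
    {z₂ : ℂ} (hz₂ : ‖z₂‖ < 1) {a : ℂ} (ha : ‖a‖ < 1) (ha0 : a ≠ 0) :
    (‖mob a (F !₂[0, z₂])‖)^2 ≤
      (‖a‖)^2 + (‖z₂‖)^2 - (‖a‖)^2 * (‖z₂‖)^2 := by
  set b : ℝ := (‖a‖)^2 with hbdef
  set r2 : ℝ := (‖z₂‖)^2 with hr2def
  have hb0 : 0 < b := by
    have := norm_pos_iff.mpr ha0; positivity
  have hb1 : b < 1 := by nlinarith [norm_nonneg a]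
  have hr0 : 0 ≤ r2 := by positivity
  have hr1 : r2 < 1 := by nlinarith [norm_nonneg z₂]
  set Q : ℝ := b + r2 with hQdef
  have hQ : 0 < Q := by nlinarith
  set K : ℝ := Q - b * r2 with hKdef
  have hK : 0 < K := by nlinarith
  set s : ℝ := Real.sqrt K with hsdef
  have hs2 : s ^ 2 = K := Real.sq_sqrt hK.le
  have hs0 : 0 < s := Real.sqrt_pos.2 hK
  set c : ℝ := b / Q with hcdef
  set ρ : ℝ := s / Q with hρdef
  have hρ0 : 0 < ρ := by positivity
  -- the affine disc
  set φ : ℂ → En 2 := fun t => (1 - t) • !₂[a, 0] + t • !₂[0, z₂] with hφdef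
  have hφapp : ∀ t : ℂ, ∀ i : Fin 2, φ t i = ![(1 - t) * a, t * z₂] i := by
    intro t i
    fin_cases i <;> simp [hφdef]
  have hφ0 : ∀ t : ℂ, φ t 0 = (1 - t) * a := fun t => hφapp t 0
  have hφ1 : ∀ t : ℂ, φ t 1 = t * z₂ := fun t => hφapp t 1
  -- membership criterion
  have hφmem : ∀ t : ℂ, ‖t - (c:ℂ)‖ < ρ → φ t ∈ ball (0 : En 2) 1 := by
    intro t ht
    rw [mem_ball_En2, hφ0, hφ1]
    have h1 : (‖t - (c:ℂ)‖)^2 < ρ^2 := by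
      nlinarith [norm_nonneg (t - (c:ℂ))]
    rw [Complex.sq_norm, Complex.normSq_apply] at h1
    simp only [Complex.sub_re, Complex.sub_im, Complex.ofReal_re, Complex.ofReal_im,
      sub_zero] at h1
    rw [norm_mul, norm_mul, mul_pow, mul_pow, ← hbdef, ← hr2def,
      Complex.sq_norm, Complex.sq_norm, Complex.normSq_apply, Complex.normSq_apply]
    simp only [Complex.sub_re, Complex.sub_im, Complex.one_re, Complex.one_im, zero_sub]
    have hρ2 : ρ^2 = K / Q^2 := by rw [hρdef, div_pow, hs2]
    rw [hρ2] at h1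
    have h2 : ((t.re - c) * (t.re - c) + t.im * t.im) * Q^2 < K :=
      (lt_div_iff₀ (by positivity : (0:ℝ) < Q^2)).1 h1
    have expand : ((t.re - c) * (t.re - c) + t.im * t.im) * Q^2
        = Q^2*(t.re*t.re + t.im*t.im) - 2*b*Q*t.re + b^2 := by
      rw [hcdef]; field_simp; ring
    rw [expand] at h2
    have hb2 : b * Q - b^2 = b * r2 := by rw [hQdef]; ring
    have key : (((1 - t.re) * (1 - t.re) + -t.im * -t.im) * b
          + (t.re * t.re + t.im * t.im) * r2) * Q
        = (Q ^ 2 * (t.re * t.re + t.im * t.im) - 2 * b * Q * t.re + b ^ 2)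
          + (b * Q - b ^ 2) := by
      rw [hQdef]; ring
    have h3 : (((1 - t.re) * (1 - t.re) + -t.im * -t.im) * b
        + (t.re * t.re + t.im * t.im) * r2) * Q < 1 * Q := by
      rw [key, hb2, one_mul]
      have hKQ : K + b * r2 = Q := by rw [hKdef]; ring
      linarith [h2]
    exact lt_of_mul_lt_mul_right h3 hQ.le
  -- differentiability of the disc
  have hφdiff : Differentiable ℂ φ := by
    apply Differentiable.add
    · exact ((differentiable_const (1:ℂ)).sub differentiable_id).smul_const _
    · exact differentiable_id.smul_const _
  set g : ℂ → ℂ := fun lam => F (φ ((c:ℂ) + (ρ:ℂ) * lam)) with hgdef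
  have hinner : ∀ lam : ℂ, ‖lam‖ < 1 → φ ((c:ℂ) + (ρ:ℂ)*lam) ∈ ball (0:En 2) 1 := by
    intro lam hlam
    apply hφmem
    have e : (c:ℂ) + (ρ:ℂ)*lam - (c:ℂ) = (ρ:ℂ)*lam := by ring
    rw [e, norm_mul, Complex.norm_real, Real.norm_eq_abs, abs_of_pos hρ0]
    nlinarith [hρ0, norm_nonneg lam]
  have hgd : DifferentiableOn ℂ g (ball 0 1) := by
    have hi : Differentiable ℂ (fun lam : ℂ => φ ((c:ℂ) + (ρ:ℂ) * lam)) :=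
      hφdiff.comp ((differentiable_const _).add ((differentiable_const _).mul differentiable_id))
    exact hF.comp hi.differentiableOn
      (fun lam hlam => hinner lam (by simpa [mem_ball, dist_zero_right] using hlam))
  have hgm : MapsTo g (ball 0 1) (ball 0 1) := fun lam hlam =>
    hFm (hinner lam (by simpa [mem_ball, dist_zero_right] using hlam))
  -- the two endpoints
  have hbs : b < s := by
    rw [hsdef]
    exact (Real.lt_sqrt hb0.le).2 (by nlinarith)
  have hr2s : r2 < s := by
    rw [hsdef]
    exact (Real.lt_sqrt hr0).2 (by nlinarith)
  have hu : ‖((↑(-(b/s))) : ℂ)‖ < 1 := by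
    rw [Complex.norm_real, Real.norm_eq_abs, abs_neg, abs_of_pos (by positivity), div_lt_one hs0]
    exact hbs
  have hv : ‖((↑(r2/s)) : ℂ)‖ < 1 := by
    rw [Complex.norm_real, Real.norm_eq_abs, _root_.abs_of_nonneg (by positivity), div_lt_one hs0]
    exact hr2s
  -- values of g at the endpoints
  have harg0 : (c:ℂ) + (ρ:ℂ) * ((↑(-(b/s))) : ℂ) = 0 := by
    have e : c + ρ * (-(b/s)) = 0 := by
      rw [hcdef, hρdef]; field_simp; ring
    calc (c:ℂ) + (ρ:ℂ) * ((↑(-(b/s))) : ℂ) = ((c + ρ * (-(b/s)) : ℝ) : ℂ) := by push_cast; ring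
      _ = 0 := by rw [e]; simp
  have harg1 : (c:ℂ) + (ρ:ℂ) * ((↑(r2/s)) : ℂ) = 1 := by
    have e : c + ρ * (r2/s) = 1 := by
      rw [hcdef, hρdef]
      field_simp
      rw [hQdef]
    calc (c:ℂ) + (ρ:ℂ) * ((↑(r2/s)) : ℂ) = ((c + ρ * (r2/s) : ℝ) : ℂ) := by push_cast; ring
      _ = 1 := by rw [e]; simp
  have hφzero : φ 0 = !₂[a, 0] := by
    ext i; fin_cases i <;> simp [hφdef]
  have hφone : φ 1 = !₂[0, z₂] := by
    ext i; fin_cases i <;> simp [hφdef]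
  have hg0 : g ((↑(-(b/s))) : ℂ) = a := by
    rw [hgdef]
    simp only [harg0, hφzero]
    exact hfix a (by simpa [mem_ball, dist_zero_right] using ha)
  have hg1 : g ((↑(r2/s)) : ℂ) = F !₂[0, z₂] := by
    rw [hgdef]
    simp only [harg1, hφone]
  -- Schwarz–Pick
  have SP := schwarz_pick hgd hgm hu hv
  rw [hg0, hg1] at SP
  -- compute the right-hand side
  have hmobsq : (‖mob ((↑(-(b/s))) : ℂ) ((↑(r2/s)) : ℂ)‖)^2 = K := by
    rw [mob, Complex.conj_ofReal]
    have hcast : (((↑(-(b/s))) : ℂ) - ↑(r2/s)) / (1 - (↑(-(b/s)) : ℂ) * ↑(r2/s))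
        = (((-(b/s) - r2/s) / (1 - (-(b/s))*(r2/s)) : ℝ) : ℂ) := by push_cast; ring
    rw [hcast, Complex.norm_real, Real.norm_eq_abs, _root_.sq_abs]
    have hnum : (-(b/s)) - r2/s = -(Q/s) := by rw [hQdef]; ring
    have hKne : (Q : ℝ) - b * r2 ≠ 0 := by rw [← hKdef]; exact hK.ne'
    have hden : 1 - (-(b/s))*(r2/s) = Q/K := by
      have e : (1 - (-(b/s))*(r2/s)) * s^2 = s^2 + b * r2 := by field_simp; ring
      rw [eq_div_iff hK.ne', ← hs2, e, hs2, hKdef]; ring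
    rw [hnum, hden]
    have e2 : (-(Q/s))/(Q/K) = -(K/s) := by
      field_simp
    rw [e2]
    have e3 : (-(K/s))^2 = K^2/s^2 := by ring
    rw [e3, hs2, sq, mul_div_assoc, div_self hK.ne', mul_one]
  -- conclude
  have hsq := pow_le_pow_left₀ (norm_nonneg _) SP 2
  rw [hmobsq] at hsq
  calc (‖mob a (F !₂[0, z₂])‖)^2 ≤ K := hsq
    _ = b + r2 - b * r2 := by rw [hKdef, hQdef]
    _ = (‖a‖)^2 + (‖z₂‖)^2 - (‖a‖)^2 * (‖z₂‖)^2 := by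
        rw [hbdef, hr2def]

/-- if `F : 𝔹₂ → 𝔻` is holomorphic with `F(z₁,0) = z₁` for all `z₁ ∈ 𝔻`,
then `|F(0,z₂)| ≤ |z₂|² / (2 − |z₂|²)` for every `z₂ ∈ 𝔻`. -/
theorem stmt_4 (F : En 2 → ℂ) (hF : DifferentiableOn ℂ F (ball 0 1))
    (hFm : MapsTo F (ball (0 : En 2) 1) (ball (0 : ℂ) 1))
    (hfix : ∀ z₁ ∈ ball (0 : ℂ) 1, F !₂[z₁, 0] = z₁) :
    ∀ z₂ ∈ ball (0 : ℂ) 1,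
      ‖F !₂[0, z₂]‖ ≤ (‖z₂‖) ^ 2 / (2 - (‖z₂‖) ^ 2) := by
  intro z₂ hz₂'
  have hz₂ : ‖z₂‖ < 1 := by
    simpa [mem_ball_zero_iff] using hz₂'
  set σ : ℂ := F !₂[0, z₂] with hσdef
  set r2 : ℝ := (‖z₂‖)^2 with hr2def
  have hr0 : 0 ≤ r2 := by positivity
  have h2r : 0 < 2 - r2 := by nlinarith [norm_nonneg z₂]
  by_cases hσ0 : σ = 0
  · rw [hσ0, norm_zero]; positivity
  set sA : ℝ := ‖σ‖ with hsAdef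
  have hs0 : 0 < sA := norm_pos_iff.mpr hσ0
  have hmem : !₂[0, z₂] ∈ ball (0:En 2) 1 := by
    rw [mem_ball_En2]
    simp only [Matrix.cons_val_zero, Matrix.cons_val_one, Matrix.head_cons, norm_zero]
    nlinarith [hz₂, norm_nonneg z₂]
  have hs1 : sA < 1 := by
    have := hFm hmem
    simpa [mem_ball_zero_iff, ← hσdef, ← hsAdef] using this
  -- pointwise inequality for t ∈ (0,1)
  have main : ∀ t : ℝ, 0 < t → t < 1 →
      sA * (2*t + sA*(1 + t^2)) ≤ r2 * (1 + t*sA)^2 := by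
    intro t ht0 ht1
    set a : ℂ := -(((t : ℝ) : ℂ)/((sA : ℝ) : ℂ)) * σ with hadef
    have hsne : ((sA : ℝ) : ℂ) ≠ 0 := Complex.ofReal_ne_zero.2 hs0.ne'
    have haabs : ‖a‖ = t := by
      rw [hadef, norm_mul, norm_neg, norm_div, Complex.norm_real, Real.norm_eq_abs, Complex.norm_real, Real.norm_eq_abs,
        _root_.abs_of_pos ht0, _root_.abs_of_pos hs0, ← hsAdef]
      field_simp
    have ha : ‖a‖ < 1 := by rw [haabs]; exact ht1
    have ha0 : a ≠ 0 := by
      intro h; rw [h, norm_zero] at haabs; linarith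
    have key := sliceIneq F hF hFm hfix hz₂ ha ha0
    rw [haabs, ← hσdef, ← hr2def] at key
    -- compute |mob a σ|
    have hnum : a - σ = -((((t + sA) / sA : ℝ)) : ℂ) * σ := by
      rw [hadef]; push_cast; field_simp; ring
    have hconj : (starRingEnd ℂ) σ * σ = ((sA^2 : ℝ) : ℂ) := by
      rw [mul_comm, Complex.mul_conj, Complex.normSq_eq_norm_sq, ← hsAdef]
    have hden : 1 - (starRingEnd ℂ) a * σ = (((1 + t * sA : ℝ)) : ℂ) := by
      rw [hadef, map_mul, map_neg, map_div₀, Complex.conj_ofReal, Complex.conj_ofReal]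
      rw [show (-((((t:ℝ)):ℂ)/(((sA:ℝ)):ℂ)) * (starRingEnd ℂ) σ) * σ
          = -((((t:ℝ)):ℂ)/(((sA:ℝ)):ℂ)) * ((starRingEnd ℂ) σ * σ) from by ring, hconj]
      push_cast
      field_simp
      ring
    have habs_mob : ‖mob a σ‖ = (t + sA)/(1 + t*sA) := by
      rw [mob, hnum, hden, norm_div, norm_mul, norm_neg, Complex.norm_real, Real.norm_eq_abs,
        Complex.norm_real, Real.norm_eq_abs, ← hsAdef]
      rw [_root_.abs_of_pos (by positivity : (0:ℝ) < (t + sA)/sA),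
        _root_.abs_of_pos (by positivity : (0:ℝ) < 1 + t*sA)]
      field_simp
    rw [habs_mob] at key
    have h1ts : 0 < 1 + t*sA := by positivity
    have key2 : (t+sA)^2 ≤ (t^2 + r2 - t^2*r2) * (1 + t*sA)^2 := by
      rw [div_pow] at key
      calc (t+sA)^2 = ((t+sA)^2/(1+t*sA)^2) * (1+t*sA)^2 := by field_simp
        _ ≤ (t^2 + r2 - t^2*r2) * (1 + t*sA)^2 :=
            mul_le_mul_of_nonneg_right key (by positivity)
    have ht2 : 0 < 1 - t^2 := by nlinarith
    have lin : sA * (2*t + sA*(1+t^2)) * (1-t^2) ≤ r2 * (1+t*sA)^2 * (1-t^2) := by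
      nlinarith [key2]
    exact le_of_mul_le_mul_right lin ht2
  -- take the limit t → 1⁻
  have hEv : ∀ᶠ t in 𝓝[<] (1:ℝ), sA * (2*t + sA*(1 + t^2)) ≤ r2 * (1 + t*sA)^2 := by
    filter_upwards [Ioo_mem_nhdsLT (by norm_num : (0:ℝ) < 1)] with t ht
    exact main t ht.1 ht.2
  have hT1 : Tendsto (fun t : ℝ => sA * (2*t + sA*(1 + t^2))) (𝓝[<] (1:ℝ))
      (𝓝 (sA * (2*1 + sA*(1 + 1^2)))) :=
    ((continuous_const.mul (((continuous_const.mul continuous_id).add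
      (continuous_const.mul ((continuous_const.add (continuous_pow 2)))))) ).tendsto 1).mono_left
      nhdsWithin_le_nhds
  have hT2 : Tendsto (fun t : ℝ => r2 * (1 + t*sA)^2) (𝓝[<] (1:ℝ))
      (𝓝 (r2 * (1 + 1*sA)^2)) :=
    ((continuous_const.mul (((continuous_const.add (continuous_id.mul continuous_const))).pow 2)).tendsto 1).mono_left
      nhdsWithin_le_nhds
  have lim : sA * (2*1 + sA*(1 + 1^2)) ≤ r2 * (1 + 1*sA)^2 :=
    le_of_tendsto_of_tendsto hT1 hT2 hEv
  -- conclude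
  rw [le_div_iff₀ h2r]
  nlinarith [lim, hs0]
end
end

section
/- Let a ∈ [0,1), b := √(1 − a²), and define F(z) := (z₁² + 2bz₂)/(2 − a²) for z = (z₁,z₂) ∈ 𝔹₂. Then |F(z)| < 1 for every z ∈ 𝔹₂, and F(aλ, bλ²) = λ² for every λ ∈ 𝔻. -/
open Metric Set Complex

noncomputable section

/-- for `a ∈ [0,1)`, `b := √(1−a²)`, `F(z) := (z₁² + 2bz₂)/(2 − a²)` satisfies
`|F| < 1` on `𝔹₂` and `F(aλ, bλ²) = λ²` for `λ ∈ 𝔻`. -/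
theorem stmt_8 (a : ℝ) (ha : a ∈ Ico (0 : ℝ) 1) (b : ℝ) (hb : b = Real.sqrt (1 - a ^ 2))
    (F : En 2 → ℂ) (hFdef : ∀ z : En 2, F z = ((z 0) ^ 2 + 2 * (b : ℂ) * z 1) / (2 - (a : ℂ) ^ 2)) :
    (∀ z ∈ ball (0 : En 2) 1, ‖F z‖ < 1) ∧
    ∀ lam ∈ ball (0 : ℂ) 1, F (WithLp.toLp 2 ![(a : ℂ) * lam, (b : ℂ) * lam ^ 2]) = lam ^ 2 := by
  obtain ⟨ha0, ha1⟩ := ha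
  have ha2 : a ^ 2 < 1 := by nlinarith
  have hb0 : (0:ℝ) ≤ b := hb ▸ Real.sqrt_nonneg _
  have hb2 : b ^ 2 = 1 - a ^ 2 := by rw [hb, Real.sq_sqrt]; linarith
  have hden : (0:ℝ) < 2 - a ^ 2 := by nlinarith
  have hdenC : ((2:ℂ) - (a:ℂ) ^ 2) = ((2 - a ^ 2 : ℝ) : ℂ) := by push_cast; ring
  constructor
  · intro z hz
    rw [hFdef]
    have hznorm : ‖z‖ < 1 := mem_ball_zero_iff.mp hz
    rw [EuclideanSpace.norm_eq] at hznorm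
    have hsum : ‖z 0‖ ^ 2 + ‖z 1‖ ^ 2 < 1 := by
      have h := (Real.sqrt_lt' one_pos).mp hznorm
      simpa [Fin.sum_univ_two] using h
    have habs : ‖(z 0) ^ 2 + 2 * (b:ℂ) * z 1‖
        ≤ ‖z 0‖ ^ 2 + 2 * b * ‖z 1‖ := by
      calc ‖(z 0) ^ 2 + 2 * (b:ℂ) * z 1‖
          ≤ ‖(z 0) ^ 2‖ + ‖2 * (b:ℂ) * z 1‖ := norm_add_le _ _
        _ = ‖z 0‖ ^ 2 + 2 * b * ‖z 1‖ := by
            rw [norm_pow, norm_mul, norm_mul, Complex.norm_two, Complex.norm_real,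
              Real.norm_eq_abs, _root_.abs_of_nonneg hb0]
    rw [norm_div, hdenC, Complex.norm_real, Real.norm_eq_abs, abs_of_pos hden, div_lt_one hden]
    nlinarith [sq_nonneg (‖z 1‖ - b), habs, sq_nonneg (‖z 0‖)]
  · intro lam _
    rw [hFdef]
    have hne : ((2:ℂ) - (a:ℂ) ^ 2) ≠ 0 := by
      rw [hdenC]
      exact_mod_cast ne_of_gt hden
    have hbc : (b:ℂ) ^ 2 = 1 - (a:ℂ) ^ 2 := by exact_mod_cast hb2
    have e0 : (WithLp.toLp 2 ![(a : ℂ) * lam, (b : ℂ) * lam ^ 2] : En 2) 0 = (a:ℂ) * lam := rfl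
    have e1 : (WithLp.toLp 2 ![(a : ℂ) * lam, (b : ℂ) * lam ^ 2] : En 2) 1 = (b:ℂ) * lam ^ 2 := rfl
    rw [e0, e1, div_eq_iff hne]
    linear_combination 2 * lam ^ 2 * hbc
end
end
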